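/- Fix ε ∈ (0,1) and let Y be a real-valued random variable. Let Y₁, ..., Y_K be i.i.d. copies of Y and set ξ* = max(|Y₁|, ..., |Y_K|). Then the probability (with respect to the K-fold product measure) of the event {P(|Y| > ξ*) > ε} is at most (1-ε)^K. -/

import Mathlib

open MeasureTheory Filter Topology ENNReal

theorem stmt_8 (ε : ℝ) (hε : ε ∈ Set.Ioo (0 : ℝ) 1) (K : ℕ) [NeZero K]
    (μ : Measure ℝ) [IsProbabilityMeasure μ] :
    Measure.pi (fun _ : Fin K => μ)
      {ω : Fin K → ℝ |
        ENNReal.ofReal ε <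
          μ {x : ℝ | (Finset.univ.sup' Finset.univ_nonempty fun i : Fin K => |ω i|) < |x|}}
      ≤ ENNReal.ofReal ((1 - ε) ^ K) := by
  obtain ⟨hε0, hε1⟩ := hε
  have mset_meas : ∀ t : ℝ, MeasurableSet {x : ℝ | t < |x|} := fun t =>
    (isOpen_lt continuous_const continuous_abs).measurableSet
  set g : ℝ → ℝ≥0∞ := fun t => μ {x : ℝ | t < |x|} with hg
  have gmono : ∀ {s t : ℝ}, s ≤ t → g t ≤ g s := by
    intro s t hst
    exact measure_mono fun x hx => lt_of_le_of_lt hst hx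
  set S : Set ℝ := {t | g t ≤ ENNReal.ofReal ε} with hS
  -- S is nonempty
  have hSne : S.Nonempty := by
    have hanti : Antitone fun n : ℕ => {x : ℝ | (n : ℝ) < |x|} := by
      intro m n hmn x hx
      simp only [Set.mem_setOf_eq] at hx ⊢
      exact lt_of_le_of_lt (Nat.cast_le.mpr hmn) hx
    have hiInter : (⋂ n : ℕ, {x : ℝ | (n : ℝ) < |x|}) = ∅ := by
      ext x
      simp only [Set.mem_iInter, Set.mem_empty_iff_false, iff_false, not_forall, Set.mem_setOf_eq,
        not_lt]
      obtain ⟨n, hn⟩ := exists_nat_gt |x|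
      exact ⟨n, hn.le⟩
    have h0 : (⨅ n : ℕ, g n) = 0 := by
      rw [hg]
      rw [← hanti.measure_iInter (fun n => (mset_meas _).nullMeasurableSet)
        ⟨0, measure_ne_top μ _⟩, hiInter, measure_empty]
    have : (⨅ n : ℕ, g n) < ENNReal.ofReal ε := by
      rw [h0]; exact ENNReal.ofReal_pos.mpr hε0
    obtain ⟨n, hn⟩ := iInf_lt_iff.mp this
    exact ⟨n, hn.le⟩
  -- S is bounded below by 0
  have hSbdd : ∀ t ∈ S, (0 : ℝ) ≤ t := by
    intro t ht
    by_contra h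
    push_neg at h
    have huniv : {x : ℝ | t < |x|} = Set.univ := by
      ext x; simp only [Set.mem_setOf_eq, Set.mem_univ, iff_true]
      exact lt_of_lt_of_le h (abs_nonneg x)
    have : g t = 1 := by rw [hg]; simp [huniv]
    rw [hS] at ht
    simp only [Set.mem_setOf_eq, this] at ht
    have : ENNReal.ofReal ε < 1 := by
      rw [← ENNReal.ofReal_one]
      exact ENNReal.ofReal_lt_ofReal_iff_of_nonneg hε0.le |>.mpr hε1
    exact absurd ht (not_le.mpr this)
  set q : ℝ := sInf S with hq
  -- q ∈ S (right continuity)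
  have hqS : g q ≤ ENNReal.ofReal ε := by
    have hmem : ∀ n : ℕ, q + 1 / (n + 1) ∈ S := by
      intro n
      have hpos : (0 : ℝ) < 1 / (n + 1) := by positivity
      obtain ⟨s, hsS, hs⟩ := Real.lt_sInf_add_pos hSne hpos
      exact le_trans (gmono hs.le) hsS
    have hunion : {x : ℝ | q < |x|} = ⋃ n : ℕ, {x : ℝ | q + 1 / (n + 1) < |x|} := by
      ext x
      simp only [Set.mem_setOf_eq, Set.mem_iUnion]
      constructor
      · intro hx
        obtain ⟨n, hn⟩ := exists_nat_one_div_lt (sub_pos.mpr hx)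
        exact ⟨n, by linarith⟩
      · rintro ⟨n, hn⟩
        have : (0 : ℝ) < 1 / (n + 1) := by positivity
        linarith
    have hmono : Monotone fun n : ℕ => {x : ℝ | q + 1 / (n + 1) < |x|} := by
      intro m n hmn x hx
      have : (1 : ℝ) / (n + 1) ≤ 1 / (m + 1) := by
        apply one_div_le_one_div_of_le (by positivity)
        exact_mod_cast add_le_add_left (Nat.cast_le.mpr hmn) 1
      simp only [Set.mem_setOf_eq] at hx ⊢
      linarith
    rw [hg]
    simp only
    rw [hunion, hmono.measure_iUnion]
    exact iSup_le fun n => hmem n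
  -- μ {x | q ≤ |x|} ≥ ε
  have hge : ENNReal.ofReal ε ≤ μ {x : ℝ | q ≤ |x|} := by
    have hnotS : ∀ t : ℝ, t < q → ENNReal.ofReal ε < g t := by
      intro t ht
      by_contra h
      push_neg at h
      exact absurd (csInf_le ⟨0, hSbdd⟩ h) (not_le.mpr ht)
    have hinter : {x : ℝ | q ≤ |x|} = ⋂ n : ℕ, {x : ℝ | q - 1 / (n + 1) < |x|} := by
      ext x
      simp only [Set.mem_setOf_eq, Set.mem_iInter]
      constructor
      · intro hx n
        have : (0 : ℝ) < 1 / (n + 1) := by positivity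
        linarith
      · intro hx
        by_contra h
        push_neg at h
        obtain ⟨n, hn⟩ := exists_nat_one_div_lt (sub_pos.mpr h)
        have := hx n
        linarith
    have hanti : Antitone fun n : ℕ => {x : ℝ | q - 1 / (n + 1) < |x|} := by
      intro m n hmn x hx
      have : (1 : ℝ) / (n + 1) ≤ 1 / (m + 1) := by
        apply one_div_le_one_div_of_le (by positivity)
        exact_mod_cast add_le_add_left (Nat.cast_le.mpr hmn) 1
      simp only [Set.mem_setOf_eq] at hx ⊢
      linarith
    rw [hinter, hanti.measure_iInter (fun n => (mset_meas _).nullMeasurableSet)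
      ⟨0, measure_ne_top μ _⟩]
    refine le_iInf fun n => ?_
    have : q - 1 / (n + 1) < q := by
      have : (0 : ℝ) < 1 / (n + 1) := by positivity
      linarith
    exact (hnotS _ this).le
  -- μ {y | |y| < q} ≤ 1 - ε
  have hlt : μ {y : ℝ | |y| < q} ≤ ENNReal.ofReal (1 - ε) := by
    have hcompl : {y : ℝ | |y| < q} = {x : ℝ | q ≤ |x|}ᶜ := by
      ext x; simp [not_le]
    rw [hcompl, measure_compl (mset_meas q |>.compl |>.of_compl |> fun _ => by
      simpa using ((measurableSet_le measurable_const continuous_abs.measurable) : MeasurableSet {x : ℝ | q ≤ |x|})) (measure_ne_top μ _)]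
    rw [measure_univ]
    calc 1 - μ {x : ℝ | q ≤ |x|} ≤ 1 - ENNReal.ofReal ε := tsub_le_tsub_left hge 1
      _ = ENNReal.ofReal (1 - ε) := by
          rw [← ENNReal.ofReal_one, ← ENNReal.ofReal_sub _ hε0.le]
  -- event inclusion
  have hsub : {ω : Fin K → ℝ |
      ENNReal.ofReal ε <
        μ {x : ℝ | (Finset.univ.sup' Finset.univ_nonempty fun i : Fin K => |ω i|) < |x|}} ⊆
      Set.univ.pi fun _ : Fin K => {y : ℝ | |y| < q} := by
    intro ω hω i _
    have hMq : (Finset.univ.sup' Finset.univ_nonempty fun i : Fin K => |ω i|) < q := by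
      by_contra h
      push_neg at h
      have : g (Finset.univ.sup' Finset.univ_nonempty fun i : Fin K => |ω i|) ≤
          ENNReal.ofReal ε := le_trans (gmono h) hqS
      exact absurd hω (not_lt.mpr this)
    have hle : |ω i| ≤ Finset.univ.sup' Finset.univ_nonempty fun i : Fin K => |ω i| :=
      Finset.le_sup' (fun j : Fin K => |ω j|) (Finset.mem_univ i)
    exact lt_of_le_of_lt hle hMq
  calc Measure.pi (fun _ : Fin K => μ) {ω : Fin K → ℝ |
      ENNReal.ofReal ε <
        μ {x : ℝ | (Finset.univ.sup' Finset.univ_nonempty fun i : Fin K => |ω i|) < |x|}}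
      ≤ Measure.pi (fun _ : Fin K => μ) (Set.univ.pi fun _ : Fin K => {y : ℝ | |y| < q}) :=
        measure_mono hsub
    _ = ∏ _i : Fin K, μ {y : ℝ | |y| < q} := Measure.pi_pi _ _
    _ = μ {y : ℝ | |y| < q} ^ K := by simp
    _ ≤ ENNReal.ofReal (1 - ε) ^ K := pow_le_pow_left' hlt K
    _ = ENNReal.ofReal ((1 - ε) ^ K) := (ENNReal.ofReal_pow (by linarith) K).symm
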